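/- Fix nonzero integers a and b such that not both |a| = 1 and |b| = 1. Let v1=(-1,b,0), v2=(0,-1,0), v3=(1,-1,0), v4=(-1,0,-1), v5=(0,0,-1), v6=(0,1,0), v7=(0,0,1), v8=(1,0,a) in ℝ³. Every point of ℝ³ lies in at least one of the 12 cones ⟨v1,v2,v4⟩, ⟨v2,v3,v4⟩, ⟨v3,v4,v5⟩, ⟨v4,v5,v6⟩, ⟨v1,v4,v6⟩, ⟨v1,v6,v7⟩, ⟨v1,v2,v7⟩, ⟨v2,v3,v7⟩, ⟨v3,v5,v8⟩, ⟨v5,v6,v8⟩, ⟨v3,v7,v8⟩, ⟨v6,v7,v8⟩. -/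

import Mathlib

def cone3 (u v w : Fin 3 → ℝ) : Set (Fin 3 → ℝ) :=
  {x | ∃ α β γ : ℝ, 0 ≤ α ∧ 0 ≤ β ∧ 0 ≤ γ ∧ x = α • u + β • v + γ • w}

lemma mem_cone3 {u v w x : Fin 3 → ℝ} (α β γ : ℝ) (hα : 0 ≤ α) (hβ : 0 ≤ β) (hγ : 0 ≤ γ)
    (h0 : x 0 = α * u 0 + β * v 0 + γ * w 0)
    (h1 : x 1 = α * u 1 + β * v 1 + γ * w 1)
    (h2 : x 2 = α * u 2 + β * v 2 + γ * w 2) : x ∈ cone3 u v w := by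
  refine ⟨α, β, γ, hα, hβ, hγ, funext fun i => ?_⟩
  fin_cases i <;> simpa [Pi.add_apply, Pi.smul_apply, smul_eq_mul]

theorem stmt15 (a b : ℤ) (ha : a ≠ 0) (hb : b ≠ 0) (hab : ¬(|a| = 1 ∧ |b| = 1)) : ∀ x : Fin 3 → ℝ,
      x ∈ cone3 ![-1,(b:ℝ),0] ![0,-1,0] ![-1,0,-1] ∨
      x ∈ cone3 ![0,-1,0] ![1,-1,0] ![-1,0,-1] ∨
      x ∈ cone3 ![1,-1,0] ![-1,0,-1] ![0,0,-1] ∨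
      x ∈ cone3 ![-1,0,-1] ![0,0,-1] ![0,1,0] ∨
      x ∈ cone3 ![-1,(b:ℝ),0] ![-1,0,-1] ![0,1,0] ∨
      x ∈ cone3 ![-1,(b:ℝ),0] ![0,1,0] ![0,0,1] ∨
      x ∈ cone3 ![-1,(b:ℝ),0] ![0,-1,0] ![0,0,1] ∨
      x ∈ cone3 ![0,-1,0] ![1,-1,0] ![0,0,1] ∨
      x ∈ cone3 ![1,-1,0] ![0,0,-1] ![1,0,(a:ℝ)] ∨
      x ∈ cone3 ![0,0,-1] ![0,1,0] ![1,0,(a:ℝ)] ∨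
      x ∈ cone3 ![1,-1,0] ![0,0,1] ![1,0,(a:ℝ)] ∨
      x ∈ cone3 ![0,1,0] ![0,0,1] ![1,0,(a:ℝ)] := by
  intro x
  set p := x 0 with hp
  set q := x 1 with hq
  set r := x 2 with hr
  set A : ℝ := (a : ℝ)
  set B : ℝ := (b : ℝ)
  rcases le_total p 0 with hx | hx
  · -- x ≤ 0
    rcases le_total 0 r with hz | hz
    · -- z ≥ 0
      rcases le_total 0 (q + B * p) with hy | hy
      · -- cone 6
        refine Or.inr (Or.inr (Or.inr (Or.inr (Or.inr (Or.inl ?_)))))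
        exact mem_cone3 (-p) (q + B * p) r (by linarith) hy hz
          (by simp; rfl) (by simp; try ring) (by simp; rfl)
      · -- cone 7
        refine Or.inr (Or.inr (Or.inr (Or.inr (Or.inr (Or.inr (Or.inl ?_))))))
        exact mem_cone3 (-p) (-(B * p) - q) r (by linarith) (by linarith) hz
          (by simp; rfl) (by simp; try ring) (by simp; rfl)
    · -- z ≤ 0
      rcases le_total p r with hxz | hxz
      · rcases le_total q (B * (r - p)) with hy | hy
        · -- cone 1
          refine Or.inl ?_
          exact mem_cone3 (r - p) (B * (r - p) - q) (-r) (by linarith) (by linarith)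
            (by linarith) (by simp; try ring) (by simp; try ring) (by simp; rfl)
        · -- cone 5
          refine Or.inr (Or.inr (Or.inr (Or.inr (Or.inl ?_))))
          exact mem_cone3 (r - p) (-r) (q - B * (r - p)) (by linarith) (by linarith)
            (by linarith) (by simp; try ring) (by simp; try ring) (by simp; rfl)
      · rcases le_total 0 q with hy | hy
        · -- cone 4
          refine Or.inr (Or.inr (Or.inr (Or.inl ?_)))
          exact mem_cone3 (-p) (p - r) q (by linarith) (by linarith) hy
            (by simp; rfl) (by simp; rfl) (by simp; try ring)
        · rcases le_total (p + q) r with hpq | hpq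
          · -- cone 2
            refine Or.inr (Or.inl ?_)
            exact mem_cone3 (r - p - q) (p - r) (-r) (by linarith) (by linarith)
              (by linarith) (by simp; try ring) (by simp; try ring) (by simp; rfl)
          · -- cone 3
            refine Or.inr (Or.inr (Or.inl ?_))
            exact mem_cone3 (-q) (-p - q) (p + q - r) (by linarith) (by linarith)
              (by linarith) (by simp; try ring) (by simp; try ring) (by simp; try ring)
  · -- x ≥ 0
    rcases le_total 0 q with hy | hy
    · rcases le_total r (A * p) with hz | hz
      · -- cone 10
        refine Or.inr (Or.inr (Or.inr (Or.inr (Or.inr (Or.inr (Or.inr (Or.inr (Or.inr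
          (Or.inl ?_)))))))))
        exact mem_cone3 (A * p - r) q p (by linarith) hy hx
          (by simp; rfl) (by simp; rfl) (by simp; try ring)
      · -- cone 12
        refine Or.inr (Or.inr (Or.inr (Or.inr (Or.inr (Or.inr (Or.inr (Or.inr (Or.inr
          (Or.inr (Or.inr ?_))))))))))
        exact mem_cone3 q (r - A * p) p hy (by linarith) hx
          (by simp; rfl) (by simp; rfl) (by simp; try ring)
    · rcases le_total 0 (p + q) with hpq | hpq
      · rcases le_total r (A * (p + q)) with hz | hz
        · -- cone 9
          refine Or.inr (Or.inr (Or.inr (Or.inr (Or.inr (Or.inr (Or.inr (Or.inr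
            (Or.inl ?_))))))))
          exact mem_cone3 (-q) (A * (p + q) - r) (p + q) (by linarith) (by linarith) hpq
            (by simp; try ring) (by simp; try ring) (by simp; try ring)
        · -- cone 11
          refine Or.inr (Or.inr (Or.inr (Or.inr (Or.inr (Or.inr (Or.inr (Or.inr (Or.inr
            (Or.inr (Or.inl ?_))))))))))
          exact mem_cone3 (-q) (r - A * (p + q)) (p + q) (by linarith) (by linarith) hpq
            (by simp; try ring) (by simp; try ring) (by simp; try ring)
      · rcases le_total 0 r with hz | hz
        · -- cone 8
          refine Or.inr (Or.inr (Or.inr (Or.inr (Or.inr (Or.inr (Or.inr (Or.inl ?_)))))))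
          exact mem_cone3 (-p - q) p r (by linarith) hx hz
            (by simp; rfl) (by simp; try ring) (by simp; rfl)
        · rcases le_total (p + q) r with hpqr | hpqr
          · -- cone 2
            refine Or.inr (Or.inl ?_)
            exact mem_cone3 (r - p - q) (p - r) (-r) (by linarith) (by linarith)
              (by linarith) (by simp; try ring) (by simp; try ring) (by simp; rfl)
          · -- cone 3
            refine Or.inr (Or.inr (Or.inl ?_))
            exact mem_cone3 (-q) (-p - q) (p + q - r) (by linarith) (by linarith)
              (by linarith) (by simp; try ring) (by simp; try ring) (by simp; try ring)
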